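/- arXiv:1611.03166 — 4 statements merged into one kernel-verified Lean document; each statement's English description precedes it below -/
import Mathlib

section
/- Let M be a finite set of segments in the plane. A subset H ∈ NC[M] is called a heart of M if for every J ∈ NC[M] there exists J' ∈ NC[M] with J ⊆ J' and J' ∩ H ≠ ∅. If M admits a heart (i.e., M is a star set), then the Euler characteristic χ(M) = Σ_{i≥0} (−1)^i f_i(M) equals 0. -/
open scoped BigOperators Classical

/-- If a finite set `M` (with a symmetric compatibility ("non-crossing") relation `R`)
is a star set, i.e. admits a heart `H` — a compatible subset such that every compatible
subset `J` of `M` extends to a compatible subset `J'` meeting `H` — then the Euler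
characteristic `χ(M) = Σ_i (−1)^i f_i(M)` vanishes, where `f_i(M)` counts `i`-element
pairwise compatible subsets of `M`. -/
theorem chi_eq_zero_of_heart {α : Type*} [DecidableEq α] (R : α → α → Prop)
    (hsym : Symmetric R) (M H : Finset α) (hHM : H ⊆ M)
    (hHnc : (H : Set α).Pairwise R)
    (hheart : ∀ J ⊆ M, (J : Set α).Pairwise R →
      ∃ J' ⊆ M, (J' : Set α).Pairwise R ∧ J ⊆ J' ∧ (J' ∩ H).Nonempty) :
    ∑ i ∈ Finset.range (M.card + 1),
        (-1 : ℤ) ^ i *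
          ((M.powerset.filter fun S : Finset α =>
            S.card = i ∧ (S : Set α).Pairwise R).card : ℤ) = 0 := by
  classical
  set s : Finset (Finset α) := M.powerset.filter (fun S => (S : Set α).Pairwise R) with hs
  -- Step 1: rewrite the alternating sum as a sum over all compatible subsets.
  have step1 : (∑ i ∈ Finset.range (M.card + 1),
      (-1 : ℤ) ^ i *
        ((M.powerset.filter fun S : Finset α =>
          S.card = i ∧ (S : Set α).Pairwise R).card : ℤ))
      = ∑ S ∈ s, (-1 : ℤ) ^ S.card := by
    rw [← Finset.sum_fiberwise_of_maps_to (g := Finset.card)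
      (t := Finset.range (M.card + 1)) (f := fun S => (-1 : ℤ) ^ S.card) ?_]
    · refine Finset.sum_congr rfl fun i _ => ?_
      have hfil : s.filter (fun S => S.card = i)
          = M.powerset.filter fun S : Finset α => S.card = i ∧ (S : Set α).Pairwise R := by
        rw [hs, Finset.filter_filter]
        apply Finset.filter_congr
        intro S _
        simp [and_comm]
      rw [hfil, Finset.sum_congr rfl (fun S hS => by
        rw [(Finset.mem_filter.mp hS).2.1]), Finset.sum_const, nsmul_eq_mul, mul_comm]
    · intro S hS
      rw [hs, Finset.mem_filter, Finset.mem_powerset] at hS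
      exact Finset.mem_range.mpr (Nat.lt_succ_of_le (Finset.card_le_card hS.1))
  rw [step1]
  letI : LinearOrder α := IsWellOrder.linearOrder WellOrderingRel
  -- candidates: elements of H compatible with all (other) elements of S
  set cand : Finset α → Finset α :=
    fun S => H.filter (fun h => ∀ x ∈ S, x ≠ h → R h x) with hcand
  have hmem_s : ∀ S ∈ s, S ⊆ M ∧ (S : Set α).Pairwise R := by
    intro S hS
    rw [hs, Finset.mem_filter, Finset.mem_powerset] at hS
    exact hS
  have hcand_ne : ∀ S ∈ s, (cand S).Nonempty := by
    intro S hS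
    obtain ⟨hSM, hSnc⟩ := hmem_s S hS
    obtain ⟨J', hJ'M, hJ'nc, hSJ', h, hh⟩ := hheart S hSM hSnc
    rw [Finset.mem_inter] at hh
    refine ⟨h, ?_⟩
    rw [hcand, Finset.mem_filter]
    exact ⟨hh.2, fun x hx hxh => hJ'nc hh.1 (hSJ' hx) (Ne.symm hxh)⟩
  -- flipping an element of H doesn't change the candidate set
  have hcand_flip : ∀ S : Finset α, ∀ h ∈ H,
      cand (if h ∈ S then S.erase h else insert h S) = cand S := by
    intro S h hh
    rw [hcand]
    apply Finset.filter_congr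
    intro h' hh'
    by_cases hcase : h ∈ S
    · rw [if_pos hcase]
      constructor
      · intro hyp x hx hxh'
        by_cases hxh : x = h
        · subst hxh
          exact hHnc hh' hh (Ne.symm hxh')
        · exact hyp x (Finset.mem_erase.mpr ⟨hxh, hx⟩) hxh'
      · intro hyp x hx hxh'
        exact hyp x (Finset.mem_of_mem_erase hx) hxh'
    · rw [if_neg hcase]
      constructor
      · intro hyp x hx hxh'
        exact hyp x (Finset.mem_insert_of_mem hx) hxh'
      · intro hyp x hx hxh'
        rcases Finset.mem_insert.mp hx with rfl | hx
        · exact hHnc hh' hh (Ne.symm hxh')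
        · exact hyp x hx hxh'
  -- the involution
  let g : ∀ S ∈ s, Finset α := fun S hS =>
    let h := (cand S).min' (hcand_ne S hS)
    if h ∈ S then S.erase h else insert h S
  have hminH : ∀ S (hS : S ∈ s), (cand S).min' (hcand_ne S hS) ∈ H := by
    intro S hS
    exact (Finset.mem_filter.mp ((cand S).min'_mem (hcand_ne S hS))).1
  have hminR : ∀ S (hS : S ∈ s), ∀ x ∈ S, x ≠ (cand S).min' (hcand_ne S hS) →
      R ((cand S).min' (hcand_ne S hS)) x := by
    intro S hS
    exact (Finset.mem_filter.mp ((cand S).min'_mem (hcand_ne S hS))).2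
  have g_mem : ∀ S (hS : S ∈ s), g S hS ∈ s := by
    intro S hS
    obtain ⟨hSM, hSnc⟩ := hmem_s S hS
    set h := (cand S).min' (hcand_ne S hS) with hh
    show (if h ∈ S then S.erase h else insert h S) ∈ s
    rw [hs, Finset.mem_filter, Finset.mem_powerset]
    by_cases hc : h ∈ S
    · rw [if_pos hc]
      refine ⟨(Finset.erase_subset h S).trans hSM, hSnc.mono ?_⟩
      intro x hx
      exact Finset.mem_of_mem_erase (by exact_mod_cast hx)
    · rw [if_neg hc]
      refine ⟨Finset.insert_subset (hHM (hminH S hS)) hSM, ?_⟩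
      rw [Finset.coe_insert]
      rw [@Set.pairwise_insert_of_symm _ _ _ _ ⟨fun _ _ hab => hsym hab⟩]
      exact ⟨hSnc, fun x hx hxh => hminR S hS x hx (Ne.symm hxh)⟩
  have g_inv : ∀ S (hS : S ∈ s), g (g S hS) (g_mem S hS) = S := by
    intro S hS
    set h := (cand S).min' (hcand_ne S hS) with hh
    have hceq : cand (g S hS) = cand S := hcand_flip S h (hminH S hS)
    have hmin_eq : (cand (g S hS)).min' (hcand_ne _ (g_mem S hS)) = h := by
      rw [hh]
      congr 1
    show (if (cand (g S hS)).min' (hcand_ne _ (g_mem S hS)) ∈ g S hS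
        then (g S hS).erase _ else insert _ (g S hS)) = S
    rw [hmin_eq]
    by_cases hc : h ∈ S
    · have hgS : g S hS = S.erase h := if_pos hc
      rw [hgS, if_neg (Finset.notMem_erase h S), Finset.insert_erase hc]
    · have hgS : g S hS = insert h S := if_neg hc
      rw [hgS, if_pos (Finset.mem_insert_self h S), Finset.erase_insert hc]
  have g_card : ∀ S (hS : S ∈ s),
      (-1 : ℤ) ^ S.card + (-1 : ℤ) ^ (g S hS).card = 0 := by
    intro S hS
    set h := (cand S).min' (hcand_ne S hS) with hh
    by_cases hc : h ∈ S
    · have hgS : g S hS = S.erase h := if_pos hc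
      rw [hgS, Finset.card_erase_of_mem hc]
      obtain ⟨n, hn⟩ : ∃ n, S.card = n + 1 :=
        ⟨S.card - 1, (Nat.succ_pred_eq_of_pos (Finset.card_pos.mpr ⟨h, hc⟩)).symm⟩
      rw [hn]
      simp [pow_succ]
    · have hgS : g S hS = insert h S := if_neg hc
      rw [hgS, Finset.card_insert_of_notMem hc]
      simp [pow_succ]
  have g_ne : ∀ S (hS : S ∈ s), ((-1 : ℤ) ^ S.card ≠ 0) → g S hS ≠ S := by
    intro S hS _ he
    set h := (cand S).min' (hcand_ne S hS) with hh
    by_cases hc : h ∈ S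
    · have hgS : g S hS = S.erase h := if_pos hc
      rw [hgS] at he
      exact Finset.erase_eq_self.mp he hc
    · have hgS : g S hS = insert h S := if_neg hc
      rw [hgS] at he
      exact hc (he ▸ Finset.mem_insert_self h S)
  exact Finset.sum_involution g g_card g_ne g_mem g_inv
end

section
/- Let P be a non-convex simple polygon with vertices in general position, and let M_e be its set of epigonals (chords lying in the exterior of P). Then χ(M_e) = Σ_{i≥0} (−1)^i e_i = 0, i.e., e_1 − e_2 + e_3 − ⋯ + (−1)^n e_{n−3} = 1, where e_i counts i-element sets of pairwise non-crossing epigonals and e_0 = 1. -/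
open scoped BigOperators Classical

/-- A simple polygon in the plane with `n` vertices in general position:
vertices are distinct, no three are collinear, non-adjacent edges are disjoint,
and consecutive edges meet only at their common vertex. -/
structure SimplePolygon (n : ℕ) [NeZero n] where
  V : Fin n → ℝ × ℝ
  three_le : 3 ≤ n
  inj : Function.Injective V
  gen_pos : ∀ i j k : Fin n, i ≠ j → j ≠ k → i ≠ k →
    ¬ Collinear ℝ ({V i, V j, V k} : Set (ℝ × ℝ))
  simple : ∀ i j : Fin n, i ≠ j → i ≠ j + 1 → j ≠ i + 1 →
    segment ℝ (V i) (V (i + 1)) ∩ segment ℝ (V j) (V (j + 1)) = ∅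
  consec : ∀ i : Fin n,
    segment ℝ (V i) (V (i + 1)) ∩ segment ℝ (V (i + 1)) (V (i + 1 + 1)) = {V (i + 1)}

namespace SimplePolygon

variable {n : ℕ} [NeZero n] (P : SimplePolygon n)

/-- The boundary of the polygon: the union of its edges. -/
def boundary : Set (ℝ × ℝ) := ⋃ i : Fin n, segment ℝ (P.V i) (P.V (i + 1))

/-- The interior region: points off the boundary whose connected component of the
complement of the boundary is bounded. -/
def interiorRegion : Set (ℝ × ℝ) :=
  {x | x ∉ P.boundary ∧ Bornology.IsBounded (connectedComponentIn P.boundaryᶜ x)}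

/-- The exterior region: points off the boundary whose connected component of the
complement of the boundary is unbounded. -/
def exteriorRegion : Set (ℝ × ℝ) :=
  {x | x ∉ P.boundary ∧ ¬ Bornology.IsBounded (connectedComponentIn P.boundaryᶜ x)}

/-- The polygon is convex if its closed region (interior together with boundary) is convex. -/
def IsConvexPolygon : Prop := Convex ℝ (P.interiorRegion ∪ P.boundary)

/-- The open segment joining the two vertices of a chord candidate. -/
def chordSeg (p : Fin n × Fin n) : Set (ℝ × ℝ) := openSegment ℝ (P.V p.1) (P.V p.2)

/-- A chord: an (ordered, `p.1 < p.2`) pair of non-consecutive vertices. -/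
def IsChord (p : Fin n × Fin n) : Prop := p.1 < p.2 ∧ p.2 ≠ p.1 + 1 ∧ p.1 ≠ p.2 + 1

/-- A diagonal: a chord lying in the interior of the polygon. -/
def IsDiagonal (p : Fin n × Fin n) : Prop := IsChord p ∧ P.chordSeg p ⊆ P.interiorRegion

/-- An epigonal: a chord lying in the exterior of the polygon. -/
def IsEpigonal (p : Fin n × Fin n) : Prop := IsChord p ∧ P.chordSeg p ⊆ P.exteriorRegion

/-- The set of diagonals. -/
noncomputable def Mdiag : Finset (Fin n × Fin n) := Finset.univ.filter fun p => P.IsDiagonal p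

/-- The set of epigonals. -/
noncomputable def Mepi : Finset (Fin n × Fin n) := Finset.univ.filter fun p => P.IsEpigonal p

/-- Two chords are non-crossing if their open segments are disjoint. -/
def NCr (p q : Fin n × Fin n) : Prop := Disjoint (P.chordSeg p) (P.chordSeg q)

/-- `fcount A i` is the number of `i`-element subsets of `A` that are pairwise non-crossing. -/
noncomputable def fcount (A : Finset (Fin n × Fin n)) (i : ℕ) : ℕ :=
  (A.powerset.filter fun S : Finset (Fin n × Fin n) => S.card = i ∧ (S : Set (Fin n × Fin n)).Pairwise P.NCr).card

/-- The Euler characteristic `χ(A) = Σ (−1)^i f_i(A)`. -/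
noncomputable def chi (A : Finset (Fin n × Fin n)) : ℤ :=
  ∑ i ∈ Finset.range (A.card + 1), (-1 : ℤ) ^ i * P.fcount A i

/-- The interior of the polygon with the open segments of the chords in `I` removed. -/
def cutRegion (I : Finset (Fin n × Fin n)) : Set (ℝ × ℝ) :=
  P.interiorRegion \ ⋃ p ∈ I, P.chordSeg p

/-- The sub-polygon pieces into which `I` divides `P`: the connected components of
the interior with the segments of `I` removed. -/
def pieces (I : Finset (Fin n × Fin n)) : Set (Set (ℝ × ℝ)) :=
  {C | ∃ x ∈ P.cutRegion I, C = connectedComponentIn (P.cutRegion I) x}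

/-- The diagonals of the sub-polygon corresponding to a piece `C`. -/
noncomputable def diagsIn (C : Set (ℝ × ℝ)) : Finset (Fin n × Fin n) :=
  P.Mdiag.filter fun p => P.chordSeg p ⊆ C

/-- `I` divides `P` into convex sub-polygons. -/
def ConvexPartition (I : Finset (Fin n × Fin n)) : Prop :=
  ∀ C ∈ P.pieces I, Convex ℝ C

end SimplePolygon




private lemma ray_not_bounded {K : Set (ℝ × ℝ)} {x w : ℝ × ℝ} (hw : w ≠ 0)
    (h : ∀ t : ℝ, 0 ≤ t → x + t • w ∉ K) :
    ¬ Bornology.IsBounded (connectedComponentIn Kᶜ x) := by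
  intro hb
  set R : Set (ℝ × ℝ) := (fun t : ℝ => x + t • w) '' Set.Ici 0 with hR
  have hRK : R ⊆ Kᶜ := by
    rintro y ⟨t, ht, rfl⟩
    exact h t ht
  have hxR : x ∈ R := ⟨0, Set.mem_Ici.2 le_rfl, by simp⟩
  have hRconn : IsPreconnected R := by
    apply IsPreconnected.image (isPreconnected_Ici)
    exact (Continuous.add continuous_const (continuous_id.smul continuous_const)).continuousOn
  have hsub : R ⊆ connectedComponentIn Kᶜ x :=
    hRconn.subset_connectedComponentIn hxR hRK
  have hRb : Bornology.IsBounded R := hb.subset hsub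
  rw [isBounded_iff_forall_norm_le] at hRb
  obtain ⟨C, hC⟩ := hRb
  have hwpos : (0:ℝ) < ‖w‖ := norm_pos_iff.2 hw
  set t : ℝ := (C + ‖x‖ + 1) / ‖w‖ with htdef
  have ht0 : 0 ≤ t := by
    have hC0 : 0 ≤ C := le_trans (norm_nonneg x) (hC x hxR)
    positivity
  have hy := hC (x + t • w) ⟨t, ht0, rfl⟩
  have h1 : ‖t • w‖ - ‖x‖ ≤ ‖x + t • w‖ := by
    have := norm_add_le (-(x + t • w)) (x)
    have h2 : ‖t • w‖ ≤ ‖x + t • w‖ + ‖x‖ := by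
      calc ‖t • w‖ = ‖x + t • w - x‖ := by ring_nf
        _ ≤ ‖x + t • w‖ + ‖x‖ := norm_sub_le _ _
    linarith
  have h3 : ‖t • w‖ = C + ‖x‖ + 1 := by
    rw [norm_smul, Real.norm_of_nonneg ht0, htdef, div_mul_cancel₀]
    exact ne_of_gt hwpos
  rw [h3] at h1
  linarith

private lemma preconnected_subset_of_frontier {s t : Set (ℝ × ℝ)} (hs : IsPreconnected s)
    (hst : (s ∩ t).Nonempty) (hf : s ∩ frontier t = ∅) : s ⊆ t := by
  intro y hy
  by_contra hyt
  have hu : IsOpen (interior t) := isOpen_interior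
  have hv : IsOpen (closure t)ᶜ := isClosed_closure.isOpen_compl
  have hcover : s ⊆ interior t ∪ (closure t)ᶜ := by
    intro z hz
    have hzf : z ∉ frontier t := fun hzf => (Set.eq_empty_iff_forall_notMem.1 hf z) ⟨hz, hzf⟩
    by_cases hzc : z ∈ closure t
    · left
      by_contra hzi
      exact hzf ⟨hzc, hzi⟩
    · right; exact hzc
  have hne1 : (s ∩ interior t).Nonempty := by
    obtain ⟨z, hzs, hzt⟩ := hst
    have hzc : z ∈ closure t := subset_closure hzt
    have hzf : z ∉ frontier t := fun hzf => (Set.eq_empty_iff_forall_notMem.1 hf z) ⟨hzs, hzf⟩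
    refine ⟨z, hzs, ?_⟩
    by_contra hzi
    exact hzf ⟨hzc, hzi⟩
  have hne2 : (s ∩ (closure t)ᶜ).Nonempty := by
    refine ⟨y, hy, ?_⟩
    intro hyc
    have hyf : y ∉ frontier t := fun hyf => (Set.eq_empty_iff_forall_notMem.1 hf y) ⟨hy, hyf⟩
    have hyi : y ∈ interior t := by
      by_contra hyi; exact hyf ⟨hyc, hyi⟩
    exact hyt (interior_subset hyi)
  obtain ⟨z, hzs, hzu, hzv⟩ := hs _ _ hu hv hcover hne1 hne2
  exact hzv (subset_closure (interior_subset hzu))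

private lemma collinear_level (f : (ℝ × ℝ) →L[ℝ] ℝ) (v : ℝ × ℝ) (hv : f v ≠ 0) (c : ℝ) :
    Collinear ℝ {x : ℝ × ℝ | f x = c} := by
  set x₀ : ℝ × ℝ := (c / f v) • v with hx₀
  have hx₀m : x₀ ∈ {x : ℝ × ℝ | f x = c} := by
    simp only [Set.mem_setOf_eq, hx₀, map_smul, smul_eq_mul]
    field_simp
  rw [collinear_iff_of_mem hx₀m]
  set α : ℝ := f (1, 0) with hα
  set β : ℝ := f (0, 1) with hβ
  have hfeq : ∀ y : ℝ × ℝ, f y = α * y.1 + β * y.2 := by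
    intro y
    have : y = y.1 • ((1:ℝ), (0:ℝ)) + y.2 • ((0:ℝ), (1:ℝ)) := by
      ext <;> simp
    conv_lhs => rw [this]
    rw [map_add, map_smul, map_smul, smul_eq_mul, smul_eq_mul, ← hα, ← hβ]
    ring
  refine ⟨(-β, α), ?_⟩
  intro p hp
  have hd : α * (p - x₀).1 + β * (p - x₀).2 = 0 := by
    have h1 : f p = c := hp
    have h2 : f x₀ = c := hx₀m
    have := hfeq (p - x₀)
    rw [map_sub, h1, h2] at this
    linarith [this]
  have hαβ : α ≠ 0 ∨ β ≠ 0 := by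
    by_contra hcon
    push_neg at hcon
    apply hv
    rw [hfeq v, hcon.1, hcon.2]
    ring
  simp only [Prod.fst_sub, Prod.snd_sub] at hd
  rcases hαβ with hα0 | hβ0
  · refine ⟨(p - x₀).2 / α, ?_⟩
    have : ((p - x₀).2 / α) • ((-β : ℝ), α) = p - x₀ := by
      ext
      · simp only [Prod.smul_fst, smul_eq_mul, Prod.fst_sub]
        field_simp
        simp only [Prod.snd_sub]; linarith [hd]
      · simp only [Prod.smul_snd, smul_eq_mul, Prod.snd_sub]
        field_simp
    rw [this]
    simp
  · refine ⟨-(p - x₀).1 / β, ?_⟩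
    have : (-(p - x₀).1 / β) • ((-β : ℝ), α) = p - x₀ := by
      ext
      · simp only [Prod.smul_fst, smul_eq_mul, Prod.fst_sub]
        field_simp
      · simp only [Prod.smul_snd, smul_eq_mul, Prod.snd_sub]
        field_simp
        simp only [Prod.fst_sub]; linarith [hd]
    rw [this]
    simp

private lemma f_segment_le {f : (ℝ × ℝ) →L[ℝ] ℝ} {u v x : ℝ × ℝ} {c : ℝ}
    (hu : f u ≤ c) (hv : f v ≤ c) (hx : x ∈ segment ℝ u v) : f x ≤ c := by
  obtain ⟨a, b, ha, hb, hab, rfl⟩ := hx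
  simp only [map_add, map_smul, smul_eq_mul]
  have hac : a * c + b * c = c := by rw [← add_mul, hab, one_mul]
  nlinarith [mul_le_mul_of_nonneg_left hu ha, mul_le_mul_of_nonneg_left hv hb]

private lemma f_openSegment_lt {f : (ℝ × ℝ) →L[ℝ] ℝ} {u v x : ℝ × ℝ} {c : ℝ}
    (hu : f u < c) (hv : f v ≤ c) (hx : x ∈ openSegment ℝ u v) : f x < c := by
  obtain ⟨a, b, ha, hb, hab, rfl⟩ := hx
  simp only [map_add, map_smul, smul_eq_mul]
  have hac : a * c + b * c = c := by rw [← add_mul, hab, one_mul]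
  nlinarith [mul_lt_mul_of_pos_left hu ha, mul_le_mul_of_nonneg_left hv hb.le]

private lemma f_openSegment_eq {f : (ℝ × ℝ) →L[ℝ] ℝ} {u v x : ℝ × ℝ} {c : ℝ}
    (hu : f u = c) (hv : f v = c) (hx : x ∈ openSegment ℝ u v) : f x = c := by
  obtain ⟨a, b, ha, hb, hab, rfl⟩ := hx
  simp only [map_add, map_smul, smul_eq_mul, hu, hv]
  rw [← add_mul, hab, one_mul]

private lemma eq_left_of_f_eq {f : (ℝ × ℝ) →L[ℝ] ℝ} {u v x : ℝ × ℝ} {c : ℝ}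
    (hu : f u = c) (hv : f v < c) (hx : x ∈ segment ℝ u v) (hfx : f x = c) : x = u := by
  obtain ⟨a, b, ha, hb, hab, rfl⟩ := hx
  simp only [map_add, map_smul, smul_eq_mul, hu] at hfx
  have hac : a * c + b * c = c := by rw [← add_mul, hab, one_mul]
  have hb0 : b * (c - f v) = 0 := by nlinarith
  rcases mul_eq_zero.1 hb0 with h | h
  · have ha1 : a = 1 := by linarith
    rw [h, ha1]
    simp
  · exfalso; linarith

namespace SimplePolygon
variable {n : ℕ} [NeZero n] (P : SimplePolygon n)

/-- The convex hull of the vertices. -/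
noncomputable def hull : Set (ℝ × ℝ) := convexHull ℝ (Set.range P.V)

lemma convex_hull' : Convex ℝ P.hull := convex_convexHull ℝ _

lemma isCompact_hull : IsCompact P.hull :=
  (Set.finite_range P.V).isCompact_convexHull (𝕜 := ℝ)

lemma isClosed_hull : IsClosed P.hull := P.isCompact_hull.isClosed

lemma vertex_mem_hull (k : Fin n) : P.V k ∈ P.hull :=
  subset_convexHull ℝ _ ⟨k, rfl⟩

lemma vertex_mem_boundary (k : Fin n) : P.V k ∈ P.boundary :=
  Set.mem_iUnion.2 ⟨k, left_mem_segment ℝ _ _⟩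

lemma boundary_subset_hull : P.boundary ⊆ P.hull := by
  intro x hx
  obtain ⟨i, hi⟩ := Set.mem_iUnion.1 hx
  exact P.convex_hull'.segment_subset (P.vertex_mem_hull i) (P.vertex_mem_hull (i+1)) hi

lemma boundary_subset_halfplane {f : (ℝ × ℝ) →L[ℝ] ℝ} {c : ℝ}
    (h : ∀ k, f (P.V k) ≤ c) : ∀ x ∈ P.boundary, f x ≤ c := by
  intro x hx
  obtain ⟨i, hi⟩ := Set.mem_iUnion.1 hx
  exact f_segment_le (h i) (h (i+1)) hi

lemma exists_third (hn : 3 ≤ n) (a b : Fin n) : ∃ k : Fin n, k ≠ a ∧ k ≠ b := by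
  by_contra h
  push_neg at h
  have hsub : (Finset.univ : Finset (Fin n)) ⊆ {a, b} := by
    intro k _
    by_cases hk : k = a
    · simp [hk]
    · simp [h k hk]
  have h1 : n ≤ 2 := by
    calc n = (Finset.univ : Finset (Fin n)).card := by simp
      _ ≤ ({a, b} : Finset (Fin n)).card := Finset.card_le_card hsub
      _ ≤ 2 := (Finset.card_insert_le a {b}).trans (by simp)
  omega

lemma succ_ne_self (hn : 3 ≤ n) (i : Fin n) : i + 1 ≠ i := by
  intro h
  have h1 : (1 : Fin n) = 0 := by
    have h2 : (1 : Fin n) + i = 0 + i := by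
      rw [zero_add, add_comm]; exact h
    exact add_right_cancel h2
  rw [Fin.one_eq_zero_iff] at h1
  omega

lemma affineSpan_top : affineSpan ℝ (Set.range P.V) = ⊤ := by
  have h3 := P.three_le
  let i0 : Fin n := ⟨0, by omega⟩
  let i1 : Fin n := ⟨1, by omega⟩
  let i2 : Fin n := ⟨2, by omega⟩
  have h01 : i0 ≠ i1 := by simp [i0, i1, Fin.ext_iff]
  have h12 : i1 ≠ i2 := by simp [i1, i2, Fin.ext_iff]
  have h02 : i0 ≠ i2 := by simp [i0, i2, Fin.ext_iff]
  have hnc := P.gen_pos i0 i1 i2 h01 h12 h02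
  rw [AffineSubspace.affineSpan_eq_top_iff_vectorSpan_eq_top_of_nonempty ℝ (ℝ × ℝ) (ℝ × ℝ) (Set.range_nonempty _)]
  by_contra hne
  apply hnc
  have hle : vectorSpan ℝ ({P.V i0, P.V i1, P.V i2} : Set (ℝ × ℝ)) ≤
      vectorSpan ℝ (Set.range P.V) := by
    apply vectorSpan_mono
    rintro x (rfl | rfl | rfl) <;> simp_all <;> exact ⟨_, rfl⟩
  have hdim : Module.finrank ℝ (vectorSpan ℝ (Set.range P.V)) < 2 := by
    have htop : Module.finrank ℝ (ℝ × ℝ) = 2 := by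
      simp [Module.finrank_prod]
    by_contra hge
    push_neg at hge
    have := Submodule.finrank_le (vectorSpan ℝ (Set.range P.V))
    rw [htop] at this
    have heq : Module.finrank ℝ (vectorSpan ℝ (Set.range P.V)) = 2 := le_antisymm this hge
    exact hne (Submodule.eq_top_of_finrank_eq (by rw [heq, htop]))
  rw [collinear_iff_finrank_le_one]
  have := Submodule.finrank_mono hle
  omega

end SimplePolygon

namespace SimplePolygon
variable {n : ℕ} [NeZero n] (P : SimplePolygon n)

lemma interior_hull_nonempty : (interior P.hull).Nonempty := by
  rw [P.convex_hull'.interior_nonempty_iff_affineSpan_eq_top]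
  unfold hull
  rw [affineSpan_convexHull]
  exact P.affineSpan_top

/-- A hull pair: two vertices spanning an edge of the convex hull. -/
def HullPair (a b : Fin n) : Prop :=
  a ≠ b ∧ ∃ f : (ℝ × ℝ) →L[ℝ] ℝ, ∃ c : ℝ,
    f (P.V a) = c ∧ f (P.V b) = c ∧ ∀ k : Fin n, k ≠ a → k ≠ b → f (P.V k) < c

lemma hullPair_symm {a b : Fin n} (h : P.HullPair a b) : P.HullPair b a := by
  obtain ⟨hab, f, c, h1, h2, h3⟩ := h
  exact ⟨hab.symm, f, c, h2, h1, fun k hk1 hk2 => h3 k hk2 hk1⟩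

lemma frontier_hull_subset_boundary
    (Hyp : ∀ a b : Fin n, P.HullPair a b → (b = a + 1 ∨ a = b + 1)) :
    frontier P.hull ⊆ P.boundary := by
  intro x hx
  have hxc : x ∈ P.hull := by
    rw [← P.isClosed_hull.closure_eq]
    exact frontier_subset_closure hx
  have hxi : x ∉ interior P.hull := hx.2
  obtain ⟨z, hz⟩ := P.interior_hull_nonempty
  obtain ⟨f, hf⟩ := geometric_hahn_banach_open_point
    (P.convex_hull'.interior) isOpen_interior hxi
  set c : ℝ := f x with hc
  have hle : ∀ y ∈ P.hull, f y ≤ c := by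
    intro y hy
    have hseg : openSegment ℝ y z ⊆ interior P.hull :=
      P.convex_hull'.openSegment_closure_interior_subset_interior
        (subset_closure hy) hz
    have hclosed : IsClosed {w : ℝ × ℝ | f w ≤ c} :=
      isClosed_le f.continuous continuous_const
    have hsub : openSegment ℝ y z ⊆ {w : ℝ × ℝ | f w ≤ c} :=
      fun w hw => le_of_lt (hf w (hseg hw))
    have hyc : y ∈ closure (openSegment ℝ y z) :=
      segment_subset_closure_openSegment (left_mem_segment ℝ y z)
    exact closure_minimal hsub hclosed hyc
  have hvle : ∀ k : Fin n, f (P.V k) ≤ c := fun k => hle _ (P.vertex_mem_hull k)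
  have hfzc : f z < c := hf z hz
  have hvne : f (x - z) ≠ 0 := by
    rw [map_sub]
    exact ne_of_gt (sub_pos.2 hfzc)
  -- express x as a convex combination of vertices
  classical
  set s : Finset (ℝ × ℝ) := Finset.univ.image P.V with hs
  have hcoe : (↑s : Set (ℝ × ℝ)) = Set.range P.V := by
    rw [hs, Finset.coe_image, Finset.coe_univ, Set.image_univ]
  have hxhull : x ∈ convexHull ℝ (↑s : Set (ℝ × ℝ)) := by rw [hcoe]; exact hxc
  rw [Finset.convexHull_eq] at hxhull
  obtain ⟨w, hw0, hw1, hwx⟩ := hxhull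
  have hfy_le : ∀ y ∈ s, f y ≤ c := by
    intro y hy
    rw [hs] at hy
    obtain ⟨k, _, rfl⟩ := Finset.mem_image.1 hy
    exact hvle k
  have hfx_eq : ∑ y ∈ s, w y * f y = c := by
    have h1 : s.centerMass w id = ∑ y ∈ s, w y • id y :=
      Finset.centerMass_eq_of_sum_1 s id hw1
    rw [hwx] at h1
    have h2 : f x = f (∑ y ∈ s, w y • id y) := by rw [← h1]
    rw [map_sum] at h2
    simp only [map_smul, smul_eq_mul, id] at h2
    rw [hc, h2]
  have hsum0 : ∑ y ∈ s, w y * (c - f y) = 0 := by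
    have : ∑ y ∈ s, w y * (c - f y) = (∑ y ∈ s, w y) * c - ∑ y ∈ s, w y * f y := by
      rw [Finset.sum_mul, ← Finset.sum_sub_distrib]
      congr 1
      ext y
      ring
    rw [this, hw1, one_mul, hfx_eq, sub_self]
  have hzero : ∀ y ∈ s, f y ≠ c → w y = 0 := by
    intro y hy hyne
    have hterm := (Finset.sum_eq_zero_iff_of_nonneg (fun y hy =>
      mul_nonneg (hw0 y hy) (sub_nonneg.2 (hfy_le y hy)))).1 hsum0 y hy
    rcases mul_eq_zero.1 hterm with h | h
    · exact h
    · exact absurd (by linarith [sub_eq_zero.1 h] : f y = c) hyne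
  set T : Finset (ℝ × ℝ) := s.filter (fun y => f y = c) with hT
  have hTs : T ⊆ s := Finset.filter_subset _ _
  have hsumT : ∑ y ∈ T, w y = 1 := by
    rw [← hw1]
    apply Finset.sum_subset hTs
    intro y hy hyT
    exact hzero y hy (fun hyc => hyT (Finset.mem_filter.2 ⟨hy, hyc⟩))
  have hxT : x ∈ convexHull ℝ (↑T : Set (ℝ × ℝ)) := by
    have hxT' : T.centerMass w id = x := by
      rw [Finset.centerMass_eq_of_sum_1 _ _ hsumT, ← hwx,
        Finset.centerMass_eq_of_sum_1 _ _ hw1]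
      apply Finset.sum_subset hTs
      intro y hy hyT
      rw [hzero y hy (fun hyc => hyT (Finset.mem_filter.2 ⟨hy, hyc⟩)), zero_smul]
    rw [← hxT']
    exact Finset.centerMass_mem_convexHull T (fun i hi => hw0 i (hTs hi))
      (by rw [hsumT]; norm_num) (fun i hi => hi)
  have hTcard : T.card ≤ 2 := by
    by_contra hgt
    push_neg at hgt
    obtain ⟨T', hT'sub, hT'card⟩ := Finset.exists_subset_card_eq (by omega : 3 ≤ T.card)
    obtain ⟨y₁, y₂, y₃, h12, h13, h23, hT'eq⟩ := Finset.card_eq_three.1 hT'card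
    have hmem : ∀ y ∈ T', ∃ k : Fin n, P.V k = y ∧ f y = c := by
      intro y hy
      have hyT := hT'sub hy
      rw [hT, Finset.mem_filter] at hyT
      obtain ⟨k, _, rfl⟩ := Finset.mem_image.1 (by rw [hs] at hyT; exact hyT.1)
      exact ⟨k, rfl, hyT.2⟩
    obtain ⟨k₁, hk₁, hf₁⟩ := hmem y₁ (by rw [hT'eq]; simp)
    obtain ⟨k₂, hk₂, hf₂⟩ := hmem y₂ (by rw [hT'eq]; simp)
    obtain ⟨k₃, hk₃, hf₃⟩ := hmem y₃ (by rw [hT'eq]; simp)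
    have hk12 : k₁ ≠ k₂ := fun h => h12 (by rw [← hk₁, ← hk₂, h])
    have hk23 : k₂ ≠ k₃ := fun h => h23 (by rw [← hk₂, ← hk₃, h])
    have hk13 : k₁ ≠ k₃ := fun h => h13 (by rw [← hk₁, ← hk₃, h])
    apply P.gen_pos k₁ k₂ k₃ hk12 hk23 hk13
    apply Collinear.subset _ (collinear_level f (x - z) hvne c)
    rw [hk₁, hk₂, hk₃]
    rintro p (rfl | rfl | rfl)
    · exact hf₁
    · exact hf₂
    · exact hf₃
  have hTne : T.Nonempty := Finset.nonempty_of_sum_ne_zero (f := w)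
    (by rw [hsumT]; norm_num)
  -- case on the cardinality of T
  rcases Nat.lt_or_ge T.card 2 with h2 | h2
  · -- T.card = 1
    have hpos := Finset.card_pos.2 hTne
    have h1 : T.card = 1 := by omega
    obtain ⟨y, hy⟩ := Finset.card_eq_one.1 h1
    rw [hy] at hxT
    simp only [Finset.coe_singleton, convexHull_singleton, Set.mem_singleton_iff] at hxT
    have hyT : y ∈ T := by rw [hy]; simp
    obtain ⟨k, _, rfl⟩ := Finset.mem_image.1 (by rw [hs] at hTs; exact
      (by rw [hT, Finset.mem_filter] at hyT; exact hyT.1 : y ∈ s))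
    rw [hxT]
    exact P.vertex_mem_boundary k
  · -- T.card = 2
    have h1 : T.card = 2 := by omega
    obtain ⟨y₁, y₂, hy12, hy⟩ := Finset.card_eq_two.1 h1
    have hy₁T : y₁ ∈ T := by rw [hy]; simp
    have hy₂T : y₂ ∈ T := by rw [hy]; simp
    have hy₁s : y₁ ∈ s ∧ f y₁ = c := Finset.mem_filter.1 (hT ▸ hy₁T)
    have hy₂s : y₂ ∈ s ∧ f y₂ = c := Finset.mem_filter.1 (hT ▸ hy₂T)
    obtain ⟨a, _, ha⟩ := Finset.mem_image.1 (hs ▸ hy₁s.1)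
    obtain ⟨b, _, hb⟩ := Finset.mem_image.1 (hs ▸ hy₂s.1)
    have hab : a ≠ b := fun h => hy12 (by rw [← ha, ← hb, h])
    have hpair : P.HullPair a b := by
      refine ⟨hab, f, c, by rw [ha]; exact hy₁s.2, by rw [hb]; exact hy₂s.2, ?_⟩
      intro k hka hkb
      rcases lt_or_eq_of_le (hvle k) with h | h
      · exact h
      · exfalso
        have hkT : P.V k ∈ T := by
          rw [hT, Finset.mem_filter]
          exact ⟨by rw [hs]; exact Finset.mem_image.2 ⟨k, Finset.mem_univ k, rfl⟩, h⟩
        rw [hy] at hkT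
        simp only [Finset.mem_insert, Finset.mem_singleton] at hkT
        rcases hkT with h' | h'
        · exact hka (P.inj (by rw [h', ha]))
        · exact hkb (P.inj (by rw [h', hb]))
    have hseg : x ∈ segment ℝ y₁ y₂ := by
      rw [hy] at hxT
      have : (↑({y₁, y₂} : Finset (ℝ × ℝ)) : Set (ℝ × ℝ)) = {y₁, y₂} := by simp
      rw [this, convexHull_pair] at hxT
      exact hxT
    rcases Hyp a b hpair with h' | h'
    · refine Set.mem_iUnion.2 ⟨a, ?_⟩
      rw [← ha, ← hb] at hseg
      rw [← h']
      exact hseg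
    · refine Set.mem_iUnion.2 ⟨b, ?_⟩
      rw [segment_symm] at hseg
      rw [← hb, ← ha] at hseg
      rw [← h']
      exact hseg

end SimplePolygon

private lemma f_segment_lt {f : (ℝ × ℝ) →L[ℝ] ℝ} {u v x : ℝ × ℝ} {c : ℝ}
    (hu : f u < c) (hv : f v < c) (hx : x ∈ segment ℝ u v) : f x < c := by
  obtain ⟨a, b, ha, hb, hab, rfl⟩ := hx
  simp only [map_add, map_smul, smul_eq_mul]
  have hac : a * c + b * c = c := by rw [← add_mul, hab, one_mul]
  rcases eq_or_lt_of_le ha with h0 | h0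
  · have hb1 : b = 1 := by linarith
    rw [← h0, hb1]; simpa using hv
  · nlinarith [mul_lt_mul_of_pos_left hu h0, mul_le_mul_of_nonneg_left hv.le hb]

namespace SimplePolygon
variable {n : ℕ} [NeZero n] (P : SimplePolygon n)

lemma not_interiorRegion_of_not_hull {x : ℝ × ℝ} (hx : x ∉ P.hull) :
    x ∉ P.interiorRegion := by
  obtain ⟨f, u, hfu, hux⟩ := geometric_hahn_banach_closed_point
    P.convex_hull' P.isClosed_hull hx
  set w : ℝ × ℝ := x - P.V 0 with hw
  have hfw : 0 < f w := by
    rw [hw, map_sub]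
    have := hfu (P.V 0) (P.vertex_mem_hull 0)
    linarith
  have hwne : w ≠ 0 := fun h => by rw [h, map_zero] at hfw; exact lt_irrefl 0 hfw
  intro hmem
  refine ray_not_bounded hwne ?_ hmem.2
  intro t ht
  intro hbd
  have hfle := hfu _ (P.boundary_subset_hull hbd)
  have : f (x + t • w) = f x + t * f w := by
    rw [map_add, map_smul, smul_eq_mul]
  nlinarith

lemma mem_interiorRegion_of_mem_hull
    (Hyp : ∀ a b : Fin n, P.HullPair a b → (b = a + 1 ∨ a = b + 1))
    {x : ℝ × ℝ} (hx : x ∈ P.hull) (hxb : x ∉ P.boundary) : x ∈ P.interiorRegion := by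
  have hfr := P.frontier_hull_subset_boundary Hyp
  set C : Set (ℝ × ℝ) := connectedComponentIn P.boundaryᶜ x with hC
  have hxC : x ∈ C := mem_connectedComponentIn hxb
  have hCsub : C ⊆ P.boundaryᶜ := connectedComponentIn_subset _ _
  have hCconn : IsPreconnected C := isPreconnected_connectedComponentIn
  have hCf : C ∩ frontier P.hull = ∅ := by
    rw [Set.eq_empty_iff_forall_notMem]
    rintro y ⟨hy1, hy2⟩
    exact hCsub hy1 (hfr hy2)
  have hChull : C ⊆ P.hull :=
    preconnected_subset_of_frontier hCconn ⟨x, hxC, hx⟩ hCf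
  exact ⟨hxb, (P.isCompact_hull.isBounded.subset hChull)⟩

lemma convex_of_all_adjacent
    (Hyp : ∀ a b : Fin n, P.HullPair a b → (b = a + 1 ∨ a = b + 1)) :
    P.IsConvexPolygon := by
  unfold IsConvexPolygon
  have heq : P.interiorRegion ∪ P.boundary = P.hull := by
    ext x
    constructor
    · rintro (hx | hx)
      · by_contra hxh
        exact P.not_interiorRegion_of_not_hull hxh hx
      · exact P.boundary_subset_hull hx
    · intro hx
      by_cases hxb : x ∈ P.boundary
      · exact Or.inr hxb
      · exact Or.inl (P.mem_interiorRegion_of_mem_hull Hyp hx hxb)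
  rw [heq]
  exact P.convex_hull'

lemma hullPair_cone {a b : Fin n} (h : P.HullPair a b) (hlt : a < b)
    (h1 : b ≠ a + 1) (h2 : a ≠ b + 1) :
    P.IsEpigonal (a, b) ∧
      ∀ q : Fin n × Fin n, IsChord q → q ≠ (a, b) → P.NCr (a, b) q := by
  obtain ⟨hab, f, c, hfa, hfb, hstr⟩ := h
  have hvle : ∀ k : Fin n, f (P.V k) ≤ c := by
    intro k
    by_cases hk : k = a
    · rw [hk, hfa]
    · by_cases hk' : k = b
      · rw [hk', hfb]
      · exact (hstr k hk hk').le
  have heqmem : ∀ k : Fin n, f (P.V k) = c → k = a ∨ k = b := by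
    intro k hkc
    by_contra hcon
    push_neg at hcon
    exact absurd hkc (ne_of_lt (hstr k hcon.1 hcon.2))
  have hbd : ∀ y ∈ P.boundary, f y ≤ c := P.boundary_subset_halfplane hvle
  have hVab : P.V a ≠ P.V b := fun h' => hab (P.inj h')
  have hsegf : ∀ x ∈ P.chordSeg (a, b), f x = c := by
    intro x hx
    exact f_openSegment_eq hfa hfb hx
  have hxnotb : ∀ x ∈ P.chordSeg (a, b), x ∉ P.boundary := by
    intro x hx hxB
    have hfx : f x = c := hsegf x hx
    obtain ⟨i, hi⟩ := Set.mem_iUnion.1 hxB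
    rcases eq_or_lt_of_le (hvle i) with hui | hui
    · rcases eq_or_lt_of_le (hvle (i + 1)) with hvi | hvi
      · -- both endpoints on the line: edge {i, i+1} = {a, b}
        rcases heqmem i hui with hia | hib
        · rcases heqmem (i + 1) hvi with hja | hjb
          · exact succ_ne_self P.three_le i (by rw [hja, hia])
          · exact h1 (by rw [← hia, ← hjb])
        · rcases heqmem (i + 1) hvi with hja | hjb
          · exact h2 (by rw [← hib, ← hja])
          · exact succ_ne_self P.three_le i (by rw [hjb, hib])
      · -- x = V i ∈ {V a, V b}
        have hxu : x = P.V i := eq_left_of_f_eq hui hvi hi hfx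
        rcases heqmem i hui with hia | hib
        · rw [hia] at hxu
          rw [hxu] at hx
          exact hVab (left_mem_openSegment_iff.1 hx)
        · rw [hib] at hxu
          rw [hxu] at hx
          exact hVab (right_mem_openSegment_iff.1 hx)
    · rcases eq_or_lt_of_le (hvle (i + 1)) with hvi | hvi
      · have hxu : x = P.V (i + 1) := by
          rw [segment_symm] at hi
          exact eq_left_of_f_eq hvi hui hi hfx
        rcases heqmem (i + 1) hvi with hia | hib
        · rw [hia] at hxu
          rw [hxu] at hx
          exact hVab (left_mem_openSegment_iff.1 hx)
        · rw [hib] at hxu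
          rw [hxu] at hx
          exact hVab (right_mem_openSegment_iff.1 hx)
      · exact absurd hfx (ne_of_lt (f_segment_lt hui hvi hi))
  refine ⟨⟨⟨hlt, h1, h2⟩, ?_⟩, ?_⟩
  · -- the chord lies in the exterior region
    intro x hx
    have hfx : f x = c := hsegf x hx
    have hxb : x ∉ P.boundary := hxnotb x hx
    obtain ⟨k, hk1, hk2⟩ := exists_third P.three_le a b
    set w : ℝ × ℝ := P.V a - P.V k with hw
    have hfw : 0 < f w := by
      rw [hw, map_sub, hfa]
      linarith [hstr k hk1 hk2]
    have hwne : w ≠ 0 := fun h' => by rw [h', map_zero] at hfw; exact lt_irrefl 0 hfw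
    refine ⟨hxb, ray_not_bounded hwne ?_⟩
    intro t ht hbdmem
    rcases eq_or_lt_of_le ht with ht0 | ht0
    · rw [← ht0] at hbdmem
      simp only [zero_smul, add_zero] at hbdmem
      exact hxb hbdmem
    · have hfle := hbd _ hbdmem
      have : f (x + t • w) = f x + t * f w := by rw [map_add, map_smul, smul_eq_mul]
      nlinarith
  · -- non-crossing with every other chord
    intro q hq hqne
    have hdisj : Disjoint (P.chordSeg (a, b)) (P.chordSeg q) := by
      rw [Set.disjoint_left]
      intro x hx1 hx2
      have hfx : f x = c := hsegf x hx1
      by_cases hq1 : f (P.V q.1) = c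
      · by_cases hq2 : f (P.V q.2) = c
        · -- both endpoints of q in {a, b}, hence q = (a, b)
          apply hqne
          have hlt' : q.1 < q.2 := hq.1
          rcases heqmem q.1 hq1 with ha1 | hb1
          · rcases heqmem q.2 hq2 with ha2 | hb2
            · exfalso; rw [ha1, ha2] at hlt'; exact lt_irrefl a hlt'
            · exact Prod.ext ha1 hb2
          · rcases heqmem q.2 hq2 with ha2 | hb2
            · exfalso; rw [hb1, ha2] at hlt'; exact absurd hlt (lt_asymm hlt')
            · exfalso; rw [hb1, hb2] at hlt'; exact lt_irrefl b hlt'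
        · have hlt2 : f (P.V q.2) < c := lt_of_le_of_ne (hvle q.2) hq2
          have hx2' : x ∈ openSegment ℝ (P.V q.2) (P.V q.1) := by
            rw [openSegment_symm]; exact hx2
          exact absurd hfx (ne_of_lt (f_openSegment_lt hlt2 (hvle q.1) hx2'))
      · have hlt1 : f (P.V q.1) < c := lt_of_le_of_ne (hvle q.1) hq1
        exact absurd hfx (ne_of_lt (f_openSegment_lt hlt1 (hvle q.2) hx2))
    exact hdisj

end SimplePolygon


private lemma chi_aux {α : Type*} [DecidableEq α] (A : Finset α) (r : α → α → Prop) (hr : Symmetric r) (e : α) (he : e ∈ A)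
    (hcone : ∀ q ∈ A, q ≠ e → r e q) :
    ∑ S ∈ A.powerset.filter (fun S : Finset α => ((S : Set α).Pairwise r)), (-1 : ℤ) ^ S.card = 0 := by
  classical
  set B := A.powerset.filter (fun S : Finset α => ((S : Set α).Pairwise r)) with hB
  have hmem : ∀ S : Finset α, S ∈ B ↔ S ⊆ A ∧ (S : Set α).Pairwise r := by
    intro S; simp [hB, Finset.mem_filter, Finset.mem_powerset]
  refine Finset.sum_involution
    (fun S _ => if e ∈ S then S.erase e else insert e S) ?_ ?_ ?_ ?_
  · intro S hS
    by_cases h : e ∈ S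
    · simp only [h, if_true]
      have : (S.erase e).card + 1 = S.card := Finset.card_erase_add_one h
      have hc : S.card = (S.erase e).card + 1 := this.symm
      rw [hc, pow_succ]
      ring
    · simp only [h, if_false]
      rw [Finset.card_insert_of_notMem h, pow_succ]
      ring
  · intro S hS _
    by_cases h : e ∈ S
    · simp only [h, if_true]
      intro hEq
      have := Finset.notMem_erase e S
      rw [hEq] at this
      exact this h
    · simp only [h, if_false]
      intro hEq
      have := Finset.mem_insert_self e S
      rw [hEq] at this
      exact h this
  · intro S hS
    rcases (hmem S).1 hS with ⟨hSA, hSp⟩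
    by_cases h : e ∈ S
    · simp only [h, if_true]
      exact (hmem _).2 ⟨(Finset.erase_subset e S).trans hSA,
        hSp.mono (by simp [Finset.coe_erase, Set.diff_subset])⟩
    · simp only [h, if_false]
      refine (hmem _).2 ⟨Finset.insert_subset he hSA, ?_⟩
      rw [Finset.coe_insert]
      refine Set.Pairwise.insert hSp ?_
      intro q hq hqe
      exact ⟨hcone q (hSA hq) (Ne.symm hqe), hr (hcone q (hSA hq) (Ne.symm hqe))⟩
  · intro S hS
    by_cases h : e ∈ S
    · simp [h, Finset.insert_erase h]
    · simp [h, Finset.erase_insert h]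

namespace SimplePolygon
variable {n : ℕ} [NeZero n] (P : SimplePolygon n)

lemma chi_eq_sum (A : Finset (Fin n × Fin n)) :
    P.chi A = ∑ S ∈ A.powerset.filter
      (fun S : Finset (Fin n × Fin n) => ((S : Set (Fin n × Fin n)).Pairwise P.NCr)),
      (-1 : ℤ) ^ S.card := by
  classical
  unfold chi fcount
  rw [← Finset.sum_fiberwise_of_maps_to (g := Finset.card) (t := Finset.range (A.card + 1))
    (fun S hS => by
      simp only [Finset.mem_filter, Finset.mem_powerset] at hS
      exact Finset.mem_range.2 (Nat.lt_succ_of_le (Finset.card_le_card hS.1)))]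
  refine Finset.sum_congr rfl ?_
  intro i _
  rw [Finset.filter_filter]
  have hset : (A.powerset.filter fun S : Finset (Fin n × Fin n) =>
      S.card = i ∧ (S : Set (Fin n × Fin n)).Pairwise P.NCr)
      = A.powerset.filter fun S : Finset (Fin n × Fin n) =>
        ((S : Set (Fin n × Fin n)).Pairwise P.NCr) ∧ S.card = i := by
    apply Finset.filter_congr; intro S _; exact and_comm
  rw [hset, Finset.sum_congr rfl (fun S hS => by
    simp only [Finset.mem_filter] at hS
    rw [hS.2.2])]
  rw [Finset.sum_const, nsmul_eq_mul, mul_comm]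

lemma ncr_symm : Symmetric P.NCr := fun p q h => h.symm

lemma chi_eq_zero_of_cone (A : Finset (Fin n × Fin n)) (e : Fin n × Fin n) (he : e ∈ A)
    (hcone : ∀ q ∈ A, q ≠ e → P.NCr e q) : P.chi A = 0 := by
  rw [chi_eq_sum]
  exact chi_aux A P.NCr (P.ncr_symm) e he hcone

end SimplePolygon

/-- For a non-convex simple polygon, the Euler characteristic of the set of
epigonals vanishes: `χ(M_e) = 0`, i.e. `e₁ - e₂ + e₃ - ⋯ = 1` (with `e₀ = 1`). -/
theorem chi_Mepi_eq_zero_of_nonconvex {n : ℕ} [NeZero n] (P : SimplePolygon n)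
    (hP : ¬ P.IsConvexPolygon) : P.chi P.Mepi = 0 := by
  classical
  have key : ∃ a b : Fin n, P.HullPair a b ∧ ¬(b = a + 1 ∨ a = b + 1) := by
    by_contra hcon
    exact hP (P.convex_of_all_adjacent (fun a b hab => by
      by_contra hno
      exact hcon ⟨a, b, hab, hno⟩))
  obtain ⟨a, b, hpair, hnadj⟩ := key
  push_neg at hnadj
  obtain ⟨hn1, hn2⟩ := hnadj
  have main : ∃ e : Fin n × Fin n, P.IsEpigonal e ∧
      ∀ q : Fin n × Fin n, SimplePolygon.IsChord q → q ≠ e → P.NCr e q := by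
    rcases lt_or_gt_of_ne hpair.1 with hab | hab
    · obtain ⟨h1, h2⟩ := P.hullPair_cone hpair hab hn1 hn2
      exact ⟨(a, b), h1, h2⟩
    · obtain ⟨h1, h2⟩ := P.hullPair_cone (P.hullPair_symm hpair) hab hn2 hn1
      exact ⟨(b, a), h1, h2⟩
  obtain ⟨e, hepi, hcone⟩ := main
  have heM : e ∈ P.Mepi := Finset.mem_filter.2 ⟨Finset.mem_univ e, hepi⟩
  apply P.chi_eq_zero_of_cone P.Mepi e heM
  intro q hqM hqe
  have hq : P.IsEpigonal q := (Finset.mem_filter.1 hqM).2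
  exact hcone q hq.1 hqe
end

section
/- Let P be a simple polygon with diagonal set M_d, and let J ∈ NC[M_d] be a set of pairwise non-crossing diagonals. For I ⊆ J, the set I divides P into #I + 1 sub-polygons P_{I,1},…,P_{I,#I+1}. Then χ(M_d \ J) = Σ_{I ⊆ J} Π_{k=1}^{#I+1} χ(M_d(P_{I,k})), where M_d(Q) denotes the set of diagonals of a polygon Q. -/
open scoped BigOperators Classical

namespace ChiAux

open Finset

variable {n : ℕ} [NeZero n] (P : SimplePolygon n)

/-- Predicate: a finset of chords is pairwise non-crossing. -/
def NCset (S : Finset (Fin n × Fin n)) : Prop :=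
  (S : Set (Fin n × Fin n)).Pairwise P.NCr

/-- Signed count over non-crossing subsets. -/
noncomputable def sumNC (A : Finset (Fin n × Fin n)) : ℤ :=
  ∑ S ∈ A.powerset.filter (fun S => NCset P S), (-1 : ℤ) ^ S.card

lemma chi_eq_sumNC (A : Finset (Fin n × Fin n)) : P.chi A = sumNC P A := by
  classical
  have hmaps : ∀ S ∈ A.powerset.filter (fun S => NCset P S),
      S.card ∈ Finset.range (A.card + 1) := by
    intro S hS
    rw [Finset.mem_range, Nat.lt_succ_iff]
    exact Finset.card_le_card (Finset.mem_powerset.1 (Finset.mem_filter.1 hS).1)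
  unfold sumNC SimplePolygon.chi
  rw [← Finset.sum_fiberwise_of_maps_to hmaps (fun S => (-1 : ℤ) ^ S.card)]
  refine Finset.sum_congr rfl fun i _ => ?_
  have hfilter : ((A.powerset.filter (fun S => NCset P S)).filter (fun S => S.card = i))
      = A.powerset.filter (fun S : Finset (Fin n × Fin n) => S.card = i ∧ (S : Set (Fin n × Fin n)).Pairwise P.NCr) := by
    rw [Finset.filter_filter]
    apply Finset.filter_congr
    intro S _
    unfold NCset
    simp [and_comm]
  rw [Finset.sum_congr hfilter (fun S hS => by
    rw [(Finset.mem_filter.1 hS).2.1]), Finset.sum_const, SimplePolygon.fcount,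
    nsmul_eq_mul, mul_comm]

lemma NCr_symm {p q : Fin n × Fin n} (h : P.NCr p q) : P.NCr q p := h.symm

lemma sumNC_union {A B : Finset (Fin n × Fin n)} (hd : Disjoint A B)
    (hcross : ∀ p ∈ A, ∀ q ∈ B, P.NCr p q) :
    sumNC P (A ∪ B) = sumNC P A * sumNC P B := by
  classical
  unfold sumNC
  have key := Finset.sum_nbij' (s := (A ∪ B).powerset.filter (fun S => NCset P S))
    (t := (A.powerset.filter (fun S => NCset P S)) ×ˢ (B.powerset.filter (fun S => NCset P S)))
    (f := fun S => ((-1 : ℤ)) ^ S.card)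
    (g := fun x => ((-1 : ℤ)) ^ x.1.card * (-1) ^ x.2.card)
    (fun S => (S ∩ A, S ∩ B)) (fun S => S.1 ∪ S.2) ?_ ?_ ?_ ?_ ?_
  · rw [key, Finset.sum_product, Finset.sum_mul_sum]
  · intro S hS
    obtain ⟨hSsub, hSnc⟩ := Finset.mem_filter.1 hS
    rw [Finset.mem_product]
    constructor <;>
      exact Finset.mem_filter.2 ⟨Finset.mem_powerset.2 Finset.inter_subset_right,
        hSnc.mono (by simp [Finset.coe_subset])⟩
  · intro S hS
    rw [Finset.mem_product] at hS
    obtain ⟨h1, h2⟩ := hS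
    obtain ⟨h1s, h1n⟩ := Finset.mem_filter.1 h1
    obtain ⟨h2s, h2n⟩ := Finset.mem_filter.1 h2
    refine Finset.mem_filter.2 ⟨Finset.mem_powerset.2
      (Finset.union_subset_union (Finset.mem_powerset.1 h1s) (Finset.mem_powerset.1 h2s)), ?_⟩
    intro p hp q hq hpq
    simp only [Finset.coe_union, Set.mem_union, Finset.mem_coe] at hp hq
    rcases hp with hp | hp <;> rcases hq with hq | hq
    · exact h1n hp hq hpq
    · exact hcross p (Finset.mem_powerset.1 h1s hp) q (Finset.mem_powerset.1 h2s hq)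
    · exact NCr_symm P (hcross q (Finset.mem_powerset.1 h1s hq) p (Finset.mem_powerset.1 h2s hp))
    · exact h2n hp hq hpq
  · intro S hS
    have hsub := Finset.mem_powerset.1 (Finset.mem_filter.1 hS).1
    dsimp only
    rw [← Finset.inter_union_distrib_left, Finset.inter_eq_left.2 hsub]
  · intro S hS
    rw [Finset.mem_product] at hS
    have h1 := Finset.mem_powerset.1 (Finset.mem_filter.1 hS.1).1
    have h2 := Finset.mem_powerset.1 (Finset.mem_filter.1 hS.2).1
    have e1 : (S.1 ∪ S.2) ∩ A = S.1 := by
      rw [Finset.union_inter_distrib_right, Finset.inter_eq_left.2 h1,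
        Finset.disjoint_iff_inter_eq_empty.1 (hd.symm.mono_left h2), Finset.union_empty]
    have e2 : (S.1 ∪ S.2) ∩ B = S.2 := by
      rw [Finset.union_inter_distrib_right, Finset.inter_eq_left.2 h2,
        Finset.disjoint_iff_inter_eq_empty.1 (hd.mono_left h1), Finset.empty_union]
    rw [e1, e2]
  · intro S hS
    have hsub := Finset.mem_powerset.1 (Finset.mem_filter.1 hS).1
    have hdisj : Disjoint (S ∩ A) (S ∩ B) :=
      hd.mono Finset.inter_subset_right Finset.inter_subset_right
    have hcard : (S ∩ A).card + (S ∩ B).card = S.card := by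
      rw [← Finset.card_union_of_disjoint hdisj, ← Finset.inter_union_distrib_left,
        Finset.inter_eq_left.2 hsub]
    dsimp only
    rw [← pow_add, hcard]

lemma sumNC_biUnion {α : Type*} [DecidableEq α] (F : Finset α)
    (B : α → Finset (Fin n × Fin n))
    (h : ∀ C ∈ F, ∀ C' ∈ F, C ≠ C' →
      Disjoint (B C) (B C') ∧ ∀ p ∈ B C, ∀ q ∈ B C', P.NCr p q) :
    sumNC P (F.biUnion B) = ∏ C ∈ F, sumNC P (B C) := by
  classical
  induction F using Finset.induction_on with
  | empty =>
    simp only [Finset.biUnion_empty, Finset.prod_empty]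
    unfold sumNC
    rw [Finset.powerset_empty, Finset.filter_singleton, if_pos (by simp [NCset, Set.pairwise_empty])]
    simp
  | @insert a s ha ih =>
    rw [Finset.biUnion_insert, Finset.prod_insert ha,
      sumNC_union P ?_ ?_, ih ?_]
    · intro C hC C' hC' hne
      exact h C (Finset.mem_insert_of_mem hC) C' (Finset.mem_insert_of_mem hC') hne
    · rw [Finset.disjoint_biUnion_right]
      intro C hC
      exact (h a (Finset.mem_insert_self a s) C (Finset.mem_insert_of_mem hC)
        (fun he => ha (he ▸ hC))).1
    · intro p hp q hq
      obtain ⟨C, hC, hqC⟩ := Finset.mem_biUnion.1 hq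
      exact (h a (Finset.mem_insert_self a s) C (Finset.mem_insert_of_mem hC)
        (fun he => ha (he ▸ hC))).2 p hp q hqC

noncomputable def DI (I : Finset (Fin n × Fin n)) : Finset (Fin n × Fin n) :=
  P.Mdiag.filter (fun p => P.chordSeg p ⊆ P.cutRegion I)

noncomputable def pt (p : Fin n × Fin n) : ℝ × ℝ := (2⁻¹ : ℝ) • P.V p.1 + (2⁻¹ : ℝ) • P.V p.2

lemma pt_mem_chordSeg (p : Fin n × Fin n) : pt P p ∈ P.chordSeg p :=
  ⟨2⁻¹, 2⁻¹, by norm_num, by norm_num, by norm_num, rfl⟩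

lemma chordSeg_preconn (p : Fin n × Fin n) : IsPreconnected (P.chordSeg p) :=
  (convex_openSegment (P.V p.1) (P.V p.2)).isPreconnected

def pieceOf (I : Finset (Fin n × Fin n)) (p : Fin n × Fin n) : Set (ℝ × ℝ) :=
  connectedComponentIn (P.cutRegion I) (pt P p)

lemma chordSeg_subset_pieceOf {I : Finset (Fin n × Fin n)} {p : Fin n × Fin n}
    (h : P.chordSeg p ⊆ P.cutRegion I) : P.chordSeg p ⊆ pieceOf P I p :=
  (chordSeg_preconn P p).subset_connectedComponentIn (pt_mem_chordSeg P p) h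

lemma pieceOf_mem_pieces {I : Finset (Fin n × Fin n)} {p : Fin n × Fin n}
    (h : P.chordSeg p ⊆ P.cutRegion I) : pieceOf P I p ∈ P.pieces I :=
  ⟨pt P p, h (pt_mem_chordSeg P p), rfl⟩

lemma piece_eq_ccIn {I : Finset (Fin n × Fin n)} {C : Set (ℝ × ℝ)} {x : ℝ × ℝ}
    (hC : C ∈ P.pieces I) (hx : x ∈ C) :
    C = connectedComponentIn (P.cutRegion I) x := by
  obtain ⟨y, hy, rfl⟩ := hC
  exact connectedComponentIn_eq hx

lemma piece_subset {I : Finset (Fin n × Fin n)} {C : Set (ℝ × ℝ)} (hC : C ∈ P.pieces I) :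
    C ⊆ P.cutRegion I := by
  obtain ⟨y, hy, rfl⟩ := hC
  exact connectedComponentIn_subset _ _

lemma chi_empty : P.chi (∅ : Finset (Fin n × Fin n)) = 1 := by
  rw [chi_eq_sumNC]
  unfold sumNC
  rw [Finset.powerset_empty, Finset.filter_singleton,
    if_pos (by simp [NCset, Set.pairwise_empty]), Finset.sum_singleton]
  simp

lemma finprod_pieces (I : Finset (Fin n × Fin n)) :
    (∏ᶠ C ∈ P.pieces I, P.chi (P.diagsIn C)) = sumNC P (DI P I) := by
  classical
  set F : Finset (Set (ℝ × ℝ)) := (DI P I).image (pieceOf P I) with hF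
  have hDmem : ∀ p, p ∈ DI P I ↔ p ∈ P.Mdiag ∧ P.chordSeg p ⊆ P.cutRegion I := by
    intro p; rw [DI, Finset.mem_filter]
  have hFpieces : ∀ C ∈ F, C ∈ P.pieces I := by
    intro C hC
    obtain ⟨p, hp, rfl⟩ := Finset.mem_image.1 hC
    exact pieceOf_mem_pieces P ((hDmem p).1 hp).2
  have hpieceF : ∀ C ∈ P.pieces I, ∀ p ∈ P.diagsIn C, p ∈ DI P I ∧ pieceOf P I p = C := by
    intro C hC p hp
    obtain ⟨hpM, hpC⟩ := Finset.mem_filter.1 hp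
    have hsub : P.chordSeg p ⊆ P.cutRegion I := hpC.trans (piece_subset P hC)
    exact ⟨(hDmem p).2 ⟨hpM, hsub⟩, (piece_eq_ccIn P hC (hpC (pt_mem_chordSeg P p))).symm⟩
  have h1 : (∏ᶠ C ∈ P.pieces I, P.chi (P.diagsIn C)) = ∏ C ∈ F, P.chi (P.diagsIn C) := by
    apply finprod_mem_eq_prod_of_subset
    · intro C hC
      obtain ⟨hCp, hCs⟩ := hC
      rw [Function.mem_mulSupport] at hCs
      by_contra hCF
      have hde : P.diagsIn C = ∅ := by
        rw [Finset.eq_empty_iff_forall_notMem]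
        intro p hp
        obtain ⟨hpD, hpe⟩ := hpieceF C hCp p hp
        exact hCF (hpe ▸ Finset.mem_coe.2 (Finset.mem_image_of_mem _ hpD))
      exact hCs (hde ▸ chi_empty P)
    · exact hFpieces
  have hdisjF : ∀ C ∈ F, ∀ C' ∈ F, C ≠ C' → Disjoint C C' := by
    intro C hC C' hC' hne
    by_contra hnd
    obtain ⟨z, hz1, hz2⟩ := Set.not_disjoint_iff.1 hnd
    exact hne ((piece_eq_ccIn P (hFpieces C hC) hz1).trans
      (piece_eq_ccIn P (hFpieces C' hC') hz2).symm)
  have hkey : ∀ C ∈ F, ∀ C' ∈ F, C ≠ C' →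
      Disjoint (P.diagsIn C) (P.diagsIn C') ∧
        ∀ p ∈ P.diagsIn C, ∀ q ∈ P.diagsIn C', P.NCr p q := by
    intro C hC C' hC' hne
    have hd := hdisjF C hC C' hC' hne
    constructor
    · rw [Finset.disjoint_left]
      intro p hp hp'
      have h1' := (Finset.mem_filter.1 hp).2
      have h2' := (Finset.mem_filter.1 hp').2
      have hcs : P.chordSeg p = ∅ := disjoint_self.1 (hd.mono h1' h2')
      have := pt_mem_chordSeg P p
      rw [hcs] at this
      exact this
    · intro p hp q hq
      exact hd.mono (Finset.mem_filter.1 hp).2 (Finset.mem_filter.1 hq).2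
  have hbi : F.biUnion (fun C => P.diagsIn C) = DI P I := by
    ext p
    simp only [Finset.mem_biUnion]
    constructor
    · rintro ⟨C, hC, hp⟩
      exact (hpieceF C (hFpieces C hC) p hp).1
    · intro hp
      refine ⟨pieceOf P I p, Finset.mem_image_of_mem _ hp, ?_⟩
      rw [SimplePolygon.diagsIn, Finset.mem_filter]
      exact ⟨((hDmem p).1 hp).1, chordSeg_subset_pieceOf P ((hDmem p).1 hp).2⟩
  rw [h1, ← hbi, sumNC_biUnion P F _ hkey]
  exact Finset.prod_congr rfl fun C _ => chi_eq_sumNC P _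

lemma cutRegion_disjoint_chord {I : Finset (Fin n × Fin n)} {p : Fin n × Fin n} (hp : p ∈ I) :
    Disjoint (P.chordSeg p) (P.cutRegion I) := by
  rw [Set.disjoint_right]
  intro x hx hxp
  exact hx.2 (Set.mem_iUnion₂.2 ⟨p, hp, hxp⟩)

lemma NCr_of_mem_cut {I : Finset (Fin n × Fin n)} {p q : Fin n × Fin n} (hp : p ∈ I)
    (hq : P.chordSeg q ⊆ P.cutRegion I) : P.NCr p q :=
  (cutRegion_disjoint_chord P hp).mono_right hq

lemma NCset_union {I T : Finset (Fin n × Fin n)} (hI : NCset P I) (hT : NCset P T)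
    (hTD : T ⊆ DI P I) : NCset P (I ∪ T) := by
  intro p hp q hq hpq
  simp only [Finset.coe_union, Set.mem_union, Finset.mem_coe] at hp hq
  have hc : ∀ a ∈ I, ∀ b ∈ T, P.NCr a b := fun a ha b hb =>
    NCr_of_mem_cut P ha (Finset.mem_filter.1 (hTD hb)).2
  rcases hp with hp | hp <;> rcases hq with hq | hq
  · exact hI hp hq hpq
  · exact hc p hp q hq
  · exact NCr_symm P (hc q hq p hp)
  · exact hT hp hq hpq

lemma DI_disjoint {I : Finset (Fin n × Fin n)} : Disjoint (DI P I) I := by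
  rw [Finset.disjoint_left]
  intro p hp hpI
  have h := (Finset.mem_filter.1 hp).2
  have hmem := h (pt_mem_chordSeg P p)
  exact hmem.2 (Set.mem_iUnion₂.2 ⟨p, hpI, pt_mem_chordSeg P p⟩)

lemma sdiff_subset_DI {U I : Finset (Fin n × Fin n)} (hU : U ⊆ P.Mdiag) (hnc : NCset P U)
    (hIU : I ⊆ U) : U \ I ⊆ DI P I := by
  intro p hp
  rw [Finset.mem_sdiff] at hp
  refine Finset.mem_filter.2 ⟨hU hp.1, fun x hx => ⟨?_, ?_⟩⟩
  · have hdiag : P.IsDiagonal p := by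
      have h := hU hp.1
      rw [SimplePolygon.Mdiag, Finset.mem_filter] at h
      exact h.2
    exact hdiag.2 hx
  · intro hmem
    obtain ⟨q, hq, hxq⟩ := Set.mem_iUnion₂.1 hmem
    have hne : q ≠ p := fun he => hp.2 (he ▸ hq)
    have hqp : P.NCr q p := hnc (Finset.mem_coe.2 (hIU hq)) (Finset.mem_coe.2 hp.1) hne
    exact Set.disjoint_left.1 hqp hxq hx

lemma fiber_snd {U : Finset (Fin n × Fin n)}
    (x : Σ _ : Finset (Fin n × Fin n), Finset (Fin n × Fin n))
    (hx2 : x.2 ⊆ DI P x.1) (hxU : x.1 ∪ x.2 = U) : x.2 = U \ x.1 := by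
  ext p
  rw [Finset.mem_sdiff, ← hxU, Finset.mem_union]
  constructor
  · intro hp
    exact ⟨Or.inr hp, fun hpI => Finset.disjoint_left.1 (DI_disjoint P) (hx2 hp) hpI⟩
  · rintro ⟨hp | hp, hnI⟩
    · exact absurd hp hnI
    · exact hp


end ChiAux


/-- For a set `J` of pairwise non-crossing diagonals,
`χ(M_d ∖ J) = Σ_{I ⊆ J} Π_k χ(M_d(P_{I,k}))`, the product running over the
sub-polygons (pieces) into which `I` divides `P`. -/
theorem chi_sdiff_eq_sum_prod {n : ℕ} [NeZero n] (P : SimplePolygon n)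
    (J : Finset (Fin n × Fin n)) (hJ : J ⊆ P.Mdiag)
    (hnc : (J : Set (Fin n × Fin n)).Pairwise P.NCr) :
    P.chi (P.Mdiag \ J) =
      ∑ I ∈ J.powerset, ∏ᶠ C ∈ P.pieces I, P.chi (P.diagsIn C) := by
  classical
  have hmain : ChiAux.sumNC P (P.Mdiag \ J)
      = ∑ I ∈ J.powerset, ChiAux.sumNC P (ChiAux.DI P I) := by
    have e1 : ∑ I ∈ J.powerset, ChiAux.sumNC P (ChiAux.DI P I)
        = ∑ x ∈ J.powerset.sigma
            (fun I => (ChiAux.DI P I).powerset.filter (fun T => ChiAux.NCset P T)),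
            (-1 : ℤ) ^ x.2.card := by
      simp only [ChiAux.sumNC]
      exact Finset.sum_sigma' _ _ _
    set t := P.Mdiag.powerset.filter (fun U => ChiAux.NCset P U) with ht
    have hmaps : ∀ x ∈ J.powerset.sigma
        (fun I => (ChiAux.DI P I).powerset.filter (fun T => ChiAux.NCset P T)),
        x.1 ∪ x.2 ∈ t := by
      intro x hx
      rw [Finset.mem_sigma] at hx
      obtain ⟨hx1, hx2⟩ := hx
      rw [Finset.mem_filter] at hx2
      have hx1J : x.1 ⊆ J := Finset.mem_powerset.1 hx1
      have hx2D : x.2 ⊆ ChiAux.DI P x.1 := Finset.mem_powerset.1 hx2.1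
      refine Finset.mem_filter.2 ⟨Finset.mem_powerset.2
        (Finset.union_subset (hx1J.trans hJ)
          (hx2D.trans (Finset.filter_subset _ _))), ?_⟩
      exact ChiAux.NCset_union P (hnc.mono (Finset.coe_subset.2 hx1J)) hx2.2 hx2D
    rw [e1, ← Finset.sum_fiberwise_of_maps_to hmaps (fun x => (-1 : ℤ) ^ x.2.card)]
    have hinner : ∀ U ∈ t,
        (∑ x ∈ (J.powerset.sigma
          (fun I => (ChiAux.DI P I).powerset.filter (fun T => ChiAux.NCset P T))).filter
            (fun x => x.1 ∪ x.2 = U), (-1 : ℤ) ^ x.2.card)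
        = if U ∩ J = ∅ then (-1 : ℤ) ^ U.card else 0 := by
      intro U hU
      rw [Finset.mem_filter] at hU
      have hUM : U ⊆ P.Mdiag := Finset.mem_powerset.1 hU.1
      have hUnc := hU.2
      have e2 : (∑ x ∈ (J.powerset.sigma
          (fun I => (ChiAux.DI P I).powerset.filter (fun T => ChiAux.NCset P T))).filter
            (fun x => x.1 ∪ x.2 = U), (-1 : ℤ) ^ x.2.card)
          = ∑ I ∈ (U ∩ J).powerset, (-1 : ℤ) ^ (U \ I).card := by
        refine Finset.sum_nbij' (fun x => x.1) (fun I => ⟨I, U \ I⟩) ?_ ?_ ?_ ?_ ?_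
        · intro x hx
          rw [Finset.mem_filter, Finset.mem_sigma] at hx
          refine Finset.mem_powerset.2 (Finset.subset_inter ?_ (Finset.mem_powerset.1 hx.1.1))
          exact hx.2 ▸ Finset.subset_union_left
        · intro I hI
          have hIU : I ⊆ U := (Finset.mem_powerset.1 hI).trans Finset.inter_subset_left
          have hIJ : I ⊆ J := (Finset.mem_powerset.1 hI).trans Finset.inter_subset_right
          refine Finset.mem_filter.2 ⟨Finset.mem_sigma.2 ⟨Finset.mem_powerset.2 hIJ, ?_⟩, ?_⟩
          · refine Finset.mem_filter.2 ⟨Finset.mem_powerset.2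
              (ChiAux.sdiff_subset_DI P hUM hUnc hIU), ?_⟩
            exact hUnc.mono (Finset.coe_subset.2 Finset.sdiff_subset)
          · exact Finset.union_sdiff_of_subset hIU
        · intro x hx
          rw [Finset.mem_filter, Finset.mem_sigma] at hx
          have hx2D : x.2 ⊆ ChiAux.DI P x.1 :=
            Finset.mem_powerset.1 (Finset.mem_filter.1 hx.1.2).1
          have hs := ChiAux.fiber_snd P x hx2D hx.2
          rcases x with ⟨I, T⟩
          dsimp only at hs ⊢
          rw [hs]
        · intro I hI
          rfl
        · intro x hx
          rw [Finset.mem_filter, Finset.mem_sigma] at hx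
          have hx2D : x.2 ⊆ ChiAux.DI P x.1 :=
            Finset.mem_powerset.1 (Finset.mem_filter.1 hx.1.2).1
          have hs := ChiAux.fiber_snd P x hx2D hx.2
          rw [hs]
      rw [e2]
      have e3 : ∀ I ∈ (U ∩ J).powerset,
          ((-1 : ℤ)) ^ ((U \ I).card) = (-1 : ℤ) ^ I.card * (-1 : ℤ) ^ U.card := by
        intro I hI
        have hIU : I ⊆ U := (Finset.mem_powerset.1 hI).trans Finset.inter_subset_left
        have h4 : (U \ I).card + I.card = U.card := Finset.card_sdiff_add_card_eq_card hIU
        have hsq : ((-1 : ℤ) ^ I.card) * ((-1 : ℤ) ^ I.card) = 1 := by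
          rw [← pow_add]
          exact Even.neg_one_pow ⟨I.card, rfl⟩
        calc ((-1 : ℤ)) ^ ((U \ I).card)
            = (-1 : ℤ) ^ ((U \ I).card) * (((-1 : ℤ) ^ I.card) * ((-1 : ℤ) ^ I.card)) := by
              rw [hsq, mul_one]
          _ = ((-1 : ℤ) ^ ((U \ I).card) * (-1 : ℤ) ^ I.card) * (-1 : ℤ) ^ I.card := by ring
          _ = (-1 : ℤ) ^ U.card * (-1 : ℤ) ^ I.card := by rw [← pow_add, h4]
          _ = (-1 : ℤ) ^ I.card * (-1 : ℤ) ^ U.card := mul_comm _ _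
      rw [Finset.sum_congr rfl e3, ← Finset.sum_mul, Finset.sum_powerset_neg_one_pow_card]
      split <;> simp
    rw [Finset.sum_congr rfl hinner, ← Finset.sum_filter]
    have hset : (P.Mdiag \ J).powerset.filter (fun S => ChiAux.NCset P S)
        = t.filter (fun U => U ∩ J = ∅) := by
      rw [ht, Finset.filter_filter]
      ext U
      simp only [Finset.mem_filter, Finset.mem_powerset, Finset.subset_sdiff,
        Finset.disjoint_iff_inter_eq_empty]
      tauto
    rw [ChiAux.sumNC, hset]
  rw [ChiAux.chi_eq_sumNC, hmain]
  exact Finset.sum_congr rfl fun I _ => (ChiAux.finprod_pieces P I).symm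
end

section
/- For any a ∈ ℕ⁺ and n ∈ ℕ⁺, Σ_{k=1}^{n} (−1)^{k−1} · (1/(k+1)) · C(n,k) · C(a(n+1)+k+1, k) = 1 + (−1)^{n+1} · C(a(n+1), n)/(n+1). -/
open scoped BigOperators

lemma key : ∀ (N : ℕ), ∀ (x r : ℕ), N ≤ r →
    ∑ j ∈ Finset.range (N+1), (-1:ℚ)^j * (N.choose j) * ((x+j).choose r)
      = (-1:ℚ)^N * (x.choose (r - N)) := by
  intro N
  induction N with
  | zero => intro x r _; simp
  | succ N ih =>
    intro x r h
    have hNr : N ≤ r := Nat.le_of_succ_le h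
    have hs : r - N = (r - (N+1)) + 1 := by omega
    set s := r - (N+1) with hsdef
    -- ih at x+1
    have ih1 : ∑ j ∈ Finset.range (N+1), (-1:ℚ)^j * (N.choose j) * ((x+(j+1)).choose r)
        = (-1:ℚ)^N * ((x+1).choose (s+1)) := by
      have h2 := ih (x+1) r hNr
      rw [hs] at h2
      simpa [show ∀ j : ℕ, x+1+j = x+(j+1) from fun j => by omega] using h2
    have ih0 : ∑ j ∈ Finset.range (N+1), (-1:ℚ)^j * (N.choose j) * ((x+j).choose r)
        = (-1:ℚ)^N * (x.choose (s+1)) := by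
      have h2 := ih x r hNr; rw [hs] at h2; exact h2
    rw [Finset.sum_range_succ']
    have step : ∀ j ∈ Finset.range (N+1),
        (-1:ℚ)^(j+1) * ((N+1).choose (j+1)) * ((x+(j+1)).choose r)
        = -((-1:ℚ)^j * (N.choose j) * ((x+(j+1)).choose r))
          + ((-1:ℚ)^(j+1) * (N.choose (j+1)) * ((x+(j+1)).choose r)) := by
      intro j _
      rw [Nat.choose_succ_succ]
      push_cast
      ring
    rw [Finset.sum_congr rfl step, Finset.sum_add_distrib, Finset.sum_neg_distrib, ih1]
    have hshift : ∑ j ∈ Finset.range (N+1),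
        (-1:ℚ)^(j+1) * (N.choose (j+1)) * ((x+(j+1)).choose r)
        = (-1:ℚ)^N * (x.choose (s+1)) - (x.choose r) := by
      have h3 : ∑ j ∈ Finset.range (N+2), (-1:ℚ)^j * (N.choose j) * ((x+j).choose r)
          = ∑ j ∈ Finset.range (N+1), (-1:ℚ)^(j+1) * (N.choose (j+1)) * ((x+(j+1)).choose r)
            + (-1:ℚ)^0 * (N.choose 0) * ((x+0).choose r) := Finset.sum_range_succ' _ _
      rw [Finset.sum_range_succ, ih0] at h3
      simp only [Nat.choose_succ_self, Nat.cast_zero, mul_zero, zero_mul, add_zero] at h3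
      simp only [pow_zero, Nat.choose_zero_right, Nat.cast_one, mul_one, one_mul, Nat.add_zero] at h3
      linarith
    rw [hshift]
    simp only [pow_zero, Nat.choose_zero_right, Nat.cast_one, mul_one, one_mul, Nat.add_zero]
    rw [Nat.choose_succ_succ]
    push_cast
    ring

/-- With `d_k(n,a) = C(n,k) · C(a(n+1)+k+1, k) / (k+1)`, the alternating sum
`Σ_{k=1}^{n} (−1)^{k−1} d_k(n,a)` equals `1 + (−1)^{n+1} C(a(n+1), n)/(n+1)`. -/
theorem alternating_sum_dk (a n : ℕ) (ha : 0 < a) (hn : 0 < n) :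
    ∑ k ∈ Finset.Icc 1 n,
        (-1 : ℚ) ^ (k - 1) *
          ((n.choose k : ℚ) * ((a * (n + 1) + k + 1).choose k : ℚ) / (k + 1)) =
      1 + (-1 : ℚ) ^ (n + 1) * ((a * (n + 1)).choose n : ℚ) / (n + 1) := by
  set m := a * (n + 1) with hm
  have hmn : n + 1 ≤ m := by
    calc n + 1 = 1 * (n+1) := by ring
    _ ≤ a * (n+1) := Nat.mul_le_mul_right _ ha
  -- the key identity at N = n+1, x = m, r = m+1
  have hkey := key (n+1) m (m+1) (by omega)
  -- peel off j = 0 and j = 1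
  rw [Finset.sum_range_succ', Finset.sum_range_succ'] at hkey
  have h0 : ((m + 0).choose (m+1) : ℚ) = 0 := by
    simp [Nat.choose_eq_zero_of_lt]
  have hsymm : m + 1 - (n + 1) = m - n := by omega
  have hmn' : (m - n) = m - n := rfl
  rw [hsymm] at hkey
  have hC : (m.choose (m - n) : ℚ) = (m.choose n : ℚ) := by
    rw [← Nat.choose_symm (by omega : n ≤ m)]
  rw [hC] at hkey
  simp only [h0, pow_zero, one_mul, mul_zero, add_zero, pow_one, zero_add,
    Nat.choose_one_right, Nat.add_zero] at hkey
  -- hkey : ∑ j ∈ range n, (-1)^(j+1+1) * C(n+1, j+1+1) * C(m+(j+1+1), m+1)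
  --        + (-1) * (n+1) * C(m+1, m+1) = (-1)^(n+1) * C(m, n)
  have hT : ∑ j ∈ Finset.range n,
      (-1:ℚ)^(j+1+1) * ((n+1).choose (j+1+1)) * ((m+(j+1+1)).choose (m+1))
      = (n+1 : ℚ) + (-1:ℚ)^(n+1) * (m.choose n) := by
    have h1 : ((m+1).choose (m+1) : ℚ) = 1 := by simp
    have h2 : (m.choose (m+1) : ℚ) = 0 := by
      simp [Nat.choose_eq_zero_of_lt]
    rw [h1, h2] at hkey
    push_cast at hkey
    linarith [hkey]
  -- rewrite LHS over range n
  rw [← Finset.Ico_add_one_right_eq_Icc, Finset.sum_Ico_eq_sum_range]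
  norm_num
  have hterm : ∀ j ∈ Finset.range n,
      (-1:ℚ)^j * ((n.choose (1+j) : ℚ) * ((m+(1+j)+1).choose (1+j) : ℚ) / (1 + (j:ℚ) + 1))
      = ((-1:ℚ)^(j+1+1) * ((n+1).choose (j+1+1)) * ((m+(j+1+1)).choose (m+1))) * (1/((n:ℚ)+1)) := by
    intro j hj
    have e1 : m + (1+j) + 1 = m + (j+1+1) := by omega
    have e2 : (m + (j+1+1)).choose (m+1) = (m + (j+1+1)).choose (1+j) := by
      rw [← Nat.choose_symm (by omega : m+1 ≤ m+(j+1+1))]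
      congr 1
      omega
    have e3 : (-1:ℚ)^(j+1+1) = (-1:ℚ)^j := by
      simp [pow_succ]
    have e4 : (n+1).choose (j+1+1) = (n+1).choose ((1+j)+1) := by congr 1; omega
    rw [e1, e2, e3, e4]
    have hmul := Nat.add_one_mul_choose_eq n (1+j)
    have hmulQ : ((n:ℚ)+1) * (n.choose (1+j)) = ((n+1).choose ((1+j)+1)) * (1 + (j:ℚ) + 1) := by
      push_cast at hmul ⊢
      exact_mod_cast by push_cast [Nat.succ_eq_add_one] at hmul ⊢; linarith [hmul]
    have hj1 : (1 + (j:ℚ) + 1) ≠ 0 := by positivity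
    have hn1 : ((n:ℚ)+1) ≠ 0 := by positivity
    field_simp
    linear_combination (((m+(j+1+1)).choose (1+j) : ℚ)) * hmulQ
  rw [Finset.sum_congr rfl hterm, ← Finset.sum_mul, hT]
  have hn1 : ((n:ℚ)+1) ≠ 0 := by positivity
  field_simp
end
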